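/- Coercivity of the radial divergence on star-shaped cells (key inequality in the proof of Lemma A.1). Let T ⊆ ℝ³ be a nonempty bounded open set that is star-shaped with respect to a point x_T ∈ T. Let r : ℝ³ → ℂ be a polynomial function and set d(x) := 3 r(x) + ∇r(x) · (x − x_T) (= div(r(x)(x − x_T))). Then Re ( ∫_T d(x) · conj(r(x)) dx ) ≥ (3/2) ∫_T |r(x)|² dx. -/

import Mathlib

open MeasureTheory Topology Filter

noncomputable section

abbrev E3 : Type := EuclideanSpace ℝ (Fin 3)
abbrev C3 : Type := EuclideanSpace ℂ (Fin 3)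

/-- Evaluation of a complex polynomial in three variables at a real point. -/
def evalP (P : MvPolynomial (Fin 3) ℂ) (x : E3) : ℂ :=
  MvPolynomial.eval (fun i => ((x i : ℝ) : ℂ)) P

/-- `div (r(x) (x - x₀)) = 3 r(x) + ∇r(x) · (x - x₀)` for the polynomial field
`x ↦ r(x) (x - x₀)`, computed via formal partial derivatives. -/
def divRadial (P : MvPolynomial (Fin 3) ℂ) (x₀ x : E3) : ℂ :=
  3 * evalP P x
    + ∑ i : Fin 3, evalP (MvPolynomial.pderiv i P) x * (((x i - x₀ i : ℝ)) : ℂ)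

/- ### Auxiliary lemmas -/

lemma evalP_continuous (Q : MvPolynomial (Fin 3) ℂ) : Continuous (evalP Q) := by
  unfold evalP
  induction Q using MvPolynomial.induction_on with
  | C a => simpa using continuous_const
  | add p q hp hq => simp only [map_add]; exact hp.add hq
  | mul_X p n hp =>
      simp only [map_mul, MvPolynomial.eval_X]
      exact hp.mul (Complex.continuous_ofReal.comp (EuclideanSpace.proj n).continuous)

lemma evalP_hasDerivAt (Q : MvPolynomial (Fin 3) ℂ) (xT x : E3) (t : ℝ) :
    HasDerivAt (fun s : ℝ => evalP Q (xT + s • (x - xT)))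
      (∑ i : Fin 3, evalP (MvPolynomial.pderiv i Q) (xT + t • (x - xT)) * ((x i - xT i : ℝ) : ℂ)) t := by
  induction Q using MvPolynomial.induction_on with
  | C a => simp [evalP]; exact hasDerivAt_const _ _
  | add p q hp hq =>
      simpa [evalP, map_add, add_mul, Finset.sum_add_distrib, Pi.add_def] using hp.add hq
  | mul_X p n hp =>
      have hcoord : ∀ s : ℝ, (xT + s • (x - xT)) n = xT n + s * (x n - xT n) := by
        intro s; simp [PiLp.add_apply, PiLp.smul_apply, PiLp.sub_apply, smul_eq_mul]
      have hx : HasDerivAt (fun s : ℝ => ((((xT + s • (x - xT)) n : ℝ)) : ℂ))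
          ((x n - xT n : ℝ) : ℂ) t := by
        have h1 : HasDerivAt (fun s : ℝ => xT n + s * (x n - xT n)) (x n - xT n) t := by
          simpa using ((hasDerivAt_id t).mul_const (x n - xT n)).const_add (xT n)
        simpa [hcoord] using h1.ofReal_comp
      have h := hp.mul hx
      have hfun : (fun s : ℝ => evalP (p * MvPolynomial.X n) (xT + s • (x - xT)))
          = fun s : ℝ => evalP p (xT + s • (x - xT)) * (((xT + s • (x - xT)) n : ℝ) : ℂ) := by
        funext s; simp [evalP]
      rw [hfun]
      refine h.congr_deriv (Eq.symm ?_)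
      have e1 : ∀ i ∈ Finset.univ,
          evalP (MvPolynomial.pderiv i (p * MvPolynomial.X n)) (xT + t • (x - xT)) * ((x i - xT i : ℝ) : ℂ)
          = evalP (MvPolynomial.pderiv i p) (xT + t • (x - xT)) * ((x i - xT i : ℝ) : ℂ)
              * (((xT + t • (x - xT)) n : ℝ) : ℂ)
            + (if i = n then evalP p (xT + t • (x - xT)) * ((x n - xT n : ℝ) : ℂ) else 0) := by
        intro i _
        by_cases hin : i = n
        · subst hin
          simp only [MvPolynomial.pderiv_mul, MvPolynomial.pderiv_X_self, mul_one, if_true]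
          simp [evalP]; ring
        · simp only [MvPolynomial.pderiv_mul, MvPolynomial.pderiv_X_of_ne (Ne.symm hin),
            mul_zero, add_zero, if_neg hin]
          simp [evalP]; ring
      rw [Finset.sum_congr rfl e1, Finset.sum_add_distrib, Finset.sum_ite_eq' Finset.univ n,
        ← Finset.sum_mul]
      simp

lemma integrableOn_of_cont {X : Type*} [NormedAddCommGroup X] (g : E3 → X)
    (hg : Continuous g) (T : Set E3) (hbd : Bornology.IsBounded T) :
    IntegrableOn g T := by
  have hK : IsCompact (closure T) :=
    Metric.isCompact_of_isClosed_isBounded isClosed_closure hbd.closure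
  exact (hg.continuousOn.integrableOn_compact hK).mono_set subset_closure

lemma scaled_integral_le (q : E3 → ℝ) (hq : Continuous q) (hq0 : ∀ x, 0 ≤ q x)
    (T : Set E3) (hTm : MeasurableSet T) (hbd : Bornology.IsBounded T) (xT : E3)
    (hstar : StarConvex ℝ xT T) {t : ℝ} (ht0 : 0 < t) (ht1 : t ≤ 1) :
    ∫ x in T, t ^ 3 * q (xT + t • (x - xT)) ≤ ∫ x in T, q x := by
  set f : E3 → E3 := fun x => xT + t • (x - xT) with hf
  have hderiv : ∀ x ∈ T, HasFDerivWithinAt f (t • ContinuousLinearMap.id ℝ E3) T x := by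
    intro x _
    exact ((((hasFDerivAt_id x).sub_const xT).const_smul t).const_add xT).hasFDerivWithinAt
  have hdet : (t • ContinuousLinearMap.id ℝ E3).det = t ^ 3 := by
    simp [ContinuousLinearMap.det, LinearMap.det_smul, finrank_euclideanSpace_fin]
  have hinj : Set.InjOn f T := by
    intro a _ b _ h
    have h2 : t • (a - xT) = t • (b - xT) := by
      have := h; simp only [hf] at this; exact add_left_cancel this
    have := smul_right_injective E3 ht0.ne' h2
    simpa using this
  have himg : f '' T ⊆ T := by
    rintro _ ⟨x, hx, rfl⟩
    have h := hstar hx (sub_nonneg.2 ht1) ht0.le (by ring)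
    have : xT + t • (x - xT) = (1 - t) • xT + t • x := by
      rw [smul_sub, sub_smul, one_smul]; abel
    rw [hf]; simpa [this] using h
  have key := integral_image_eq_integral_abs_det_fderiv_smul volume hTm hderiv hinj q
  have key2 : ∫ x in f '' T, q x = ∫ x in T, t ^ 3 * q (f x) := by
    rw [key]
    congr 1; funext x
    rw [hdet, smul_eq_mul, abs_of_pos (by positivity)]
  rw [← key2]
  exact setIntegral_mono_set (integrableOn_of_cont q hq T hbd)
    (Filter.Eventually.of_forall fun x => hq0 x) (HasSubset.Subset.eventuallyLE himg)

/-- The tangential derivative term. -/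
def Sfun (P : MvPolynomial (Fin 3) ℂ) (xT : E3) (t : ℝ) (x : E3) : ℂ :=
  ∑ i : Fin 3, evalP (MvPolynomial.pderiv i P) (xT + t • (x - xT)) * ((x i - xT i : ℝ) : ℂ)

def psiF (P : MvPolynomial (Fin 3) ℂ) (xT : E3) (t : ℝ) (x : E3) : ℝ :=
  t ^ 3 * ‖evalP P (xT + t • (x - xT))‖ ^ 2

def psiF' (P : MvPolynomial (Fin 3) ℂ) (xT : E3) (t : ℝ) (x : E3) : ℝ :=
  3 * t ^ 2 * ‖evalP P (xT + t • (x - xT))‖ ^ 2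
    + t ^ 3 * (2 * (Sfun P xT t x * (starRingEnd ℂ) (evalP P (xT + t • (x - xT)))).re)

lemma norm_sq_eq_re_mul_star (z : ℂ) : ‖z‖ ^ 2 = (z * star z).re := by
  rw [Complex.star_def, Complex.mul_conj]
  simp [← Complex.normSq_eq_norm_sq]

lemma re_star_mul (z w : ℂ) : (z * star w).re = (w * star z).re := by
  have : w * star z = star (z * star w) := by rw [star_mul, star_star]
  rw [this, Complex.star_def, Complex.conj_re]

lemma psiF_hasDerivAt (P : MvPolynomial (Fin 3) ℂ) (xT x : E3) (t : ℝ) :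
    HasDerivAt (fun s => psiF P xT s x) (psiF' P xT t x) t := by
  have hφ := evalP_hasDerivAt P xT x t
  have hstar := hφ.star
  have hmul := hφ.mul hstar
  have hre := Complex.reCLM.hasFDerivAt.comp_hasDerivAt t hmul
  have hpow := hasDerivAt_pow 3 t
  have h := hpow.mul hre
  have hfun : (fun s => psiF P xT s x)
      = fun s : ℝ => s ^ 3 *
          Complex.reCLM ((evalP P (xT + s • (x - xT))) * star (evalP P (xT + s • (x - xT)))) := by
    funext s
    simp only [psiF, norm_sq_eq_re_mul_star, Complex.reCLM_apply]
  rw [hfun]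
  refine h.congr_deriv (Eq.symm ?_)
  have h2 : ((evalP P (xT + t • (x - xT))) *
        star (∑ i : Fin 3, evalP (MvPolynomial.pderiv i P) (xT + t • (x - xT)) * ((x i - xT i : ℝ) : ℂ))).re
      = ((∑ i : Fin 3, evalP (MvPolynomial.pderiv i P) (xT + t • (x - xT)) * ((x i - xT i : ℝ) : ℂ)) *
        star (evalP P (xT + t • (x - xT)))).re := re_star_mul _ _
  simp only [psiF', Sfun, Function.comp_apply, Pi.mul_apply, Complex.reCLM_apply, Nat.cast_ofNat,
    Complex.add_re]
  rw [h2]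
  simp only [norm_sq_eq_re_mul_star, starRingEnd_apply]
  push_cast
  ring

/-- **Coercivity of the radial divergence on star-shaped cells**
(key inequality in the proof of Lemma A.1). -/
theorem radial_divergence_coercive_star_shaped
    (T : Set E3) (xT : E3) (hxT : xT ∈ T)
    (hbd : Bornology.IsBounded T) (hopen : IsOpen T)
    (hstar : StarConvex ℝ xT T)
    (P : MvPolynomial (Fin 3) ℂ) :
    (3 / 2 : ℝ) * ∫ x in T, ‖evalP P x‖ ^ 2 ≤
      (∫ x in T, divRadial P xT x * (starRingEnd ℂ) (evalP P x)).re := by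
  have hTm : MeasurableSet T := hopen.measurableSet
  have hK : IsCompact (closure T) :=
    Metric.isCompact_of_isClosed_isBounded isClosed_closure hbd.closure
  -- continuity facts
  have hLc : Continuous (fun p : ℝ × E3 => xT + p.1 • (p.2 - xT)) := by
    exact continuous_const.add (continuous_fst.smul (continuous_snd.sub continuous_const))
  have hφc : Continuous fun p : ℝ × E3 => evalP P (xT + p.1 • (p.2 - xT)) :=
    (evalP_continuous P).comp hLc
  have hSc : Continuous fun p : ℝ × E3 => Sfun P xT p.1 p.2 := by
    apply continuous_finset_sum
    intro i _
    exact ((evalP_continuous _).comp hLc).mul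
      (Complex.continuous_ofReal.comp
        (((EuclideanSpace.proj i).continuous.comp continuous_snd).sub continuous_const))
  have hΨc : Continuous fun p : ℝ × E3 => psiF' P xT p.1 p.2 := by
    apply Continuous.add
    · exact ((continuous_const.mul (continuous_fst.pow 2)).mul ((hφc.norm).pow 2))
    · exact (continuous_fst.pow 3).mul
        (continuous_const.mul (Complex.continuous_re.comp (hSc.mul (Complex.continuous_conj.comp hφc))))
  have hψc : Continuous fun p : ℝ × E3 => psiF P xT p.1 p.2 :=
    (continuous_fst.pow 3).mul ((hφc.norm).pow 2)
  -- uniform bound on a compact neighbourhood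
  obtain ⟨C, hC⟩ := (isCompact_Icc.prod hK).exists_bound_of_continuousOn
    (hΨc.continuousOn (s := Set.Icc ((1:ℝ)/2) (3/2) ×ˢ closure T))
  -- dominated differentiation under the integral at t = 1
  have hdom := hasDerivAt_integral_of_dominated_loc_of_deriv_le
    (μ := volume.restrict T) (x₀ := (1:ℝ)) (s := Metric.ball (1:ℝ) (1/2)) (F := fun t x => psiF P xT t x)
    (F' := fun t x => psiF' P xT t x) (bound := fun _ => C)
    (Metric.ball_mem_nhds _ (by norm_num))
    (Filter.Eventually.of_forall fun t =>
      ((hψc.comp (Continuous.prodMk_right t)).aestronglyMeasurable))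
    ((integrableOn_of_cont _ (hψc.comp (Continuous.prodMk_right (1:ℝ))) T hbd))
    ((hΨc.comp (Continuous.prodMk_right (1:ℝ))).aestronglyMeasurable)
    (by
      filter_upwards [ae_restrict_mem hTm] with x hx
      intro t ht
      have ht' : t ∈ Set.Icc ((1:ℝ)/2) (3/2) := by
        rw [Metric.mem_ball, Real.dist_eq, abs_sub_lt_iff] at ht
        constructor <;> linarith [ht.1, ht.2]
      exact hC (t, x) (Set.mk_mem_prod ht' (subset_closure hx)))
    (integrableOn_const hbd.measure_lt_top.ne)
    (Filter.Eventually.of_forall fun x => fun t _ => psiF_hasDerivAt P xT x t)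
  obtain ⟨-, hF⟩ := hdom
  -- monotonicity gives nonnegativity of the derivative
  have hq : Continuous fun x : E3 => ‖evalP P x‖ ^ 2 := ((evalP_continuous P).norm).pow 2
  have hmono : ∀ t ∈ Set.Ioo ((1:ℝ)/2) 1,
      (∫ x in T, psiF P xT t x) ≤ ∫ x in T, psiF P xT 1 x := by
    intro t ht
    have h1 : (∫ x in T, psiF P xT 1 x) = ∫ x in T, ‖evalP P x‖ ^ 2 := by
      apply setIntegral_congr_fun hTm
      intro x _; simp [psiF]
    rw [h1]
    have := scaled_integral_le (fun x => ‖evalP P x‖ ^ 2) hq (fun x => by positivity)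
      T hTm hbd xT hstar (t := t) (by linarith [ht.1]) ht.2.le
    simpa [psiF] using this
  have hderiv_nonneg : 0 ≤ ∫ x in T, psiF' P xT 1 x := by
    have hslope := hasDerivAt_iff_tendsto_slope.1 hF
    have hsub : 𝓝[<] (1:ℝ) ≤ 𝓝[≠] (1:ℝ) :=
      nhdsWithin_mono _ fun y hy => ne_of_lt hy
    refine ge_of_tendsto (hslope.mono_left hsub) ?_
    filter_upwards [Ioo_mem_nhdsLT_of_mem (by norm_num : (1:ℝ) ∈ Set.Ioc (1/2) 1)] with s hs
    have hle := hmono s hs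
    have hs1 : s - 1 < 0 := by linarith [hs.2]
    have : slope (fun t => ∫ x in T, psiF P xT t x) 1 s
        = ((∫ x in T, psiF P xT s x) - ∫ x in T, psiF P xT 1 x) / (s - 1) := by
      simp [slope_def_field]
    rw [this]
    exact div_nonneg_iff.2 (Or.inr ⟨by linarith, hs1.le⟩)
  -- put things together
  have hr_int : IntegrableOn (fun x => divRadial P xT x * (starRingEnd ℂ) (evalP P x)) T volume := by
    apply integrableOn_of_cont _ _ T hbd
    have hdivc : Continuous (divRadial P xT) := by
      apply Continuous.add
      · exact continuous_const.mul (evalP_continuous P)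
      · apply continuous_finset_sum
        intro i _
        exact (evalP_continuous _).mul
          (Complex.continuous_ofReal.comp ((EuclideanSpace.proj i).continuous.sub continuous_const))
    exact hdivc.mul (Complex.continuous_conj.comp (evalP_continuous P))
  have hre_int : (∫ x in T, divRadial P xT x * (starRingEnd ℂ) (evalP P x)).re
      = ∫ x in T, (divRadial P xT x * (starRingEnd ℂ) (evalP P x)).re := by
    have h := integral_re (μ := volume.restrict T) hr_int
    simpa [RCLike.re_to_complex] using h.symm
  have hpt : ∀ x : E3, (divRadial P xT x * (starRingEnd ℂ) (evalP P x)).re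
      = (3/2 : ℝ) * ‖evalP P x‖ ^ 2 + (1/2 : ℝ) * psiF' P xT 1 x := by
    intro x
    have h1 : psiF' P xT 1 x = 3 * ‖evalP P x‖ ^ 2
        + 2 * (Sfun P xT 1 x * (starRingEnd ℂ) (evalP P x)).re := by
      simp [psiF']
    have h2 : divRadial P xT x = 3 * evalP P x + Sfun P xT 1 x := by
      simp [divRadial, Sfun]
    rw [h1, h2, add_mul, Complex.add_re]
    have h3 : (3 * evalP P x * (starRingEnd ℂ) (evalP P x)).re = 3 * ‖evalP P x‖ ^ 2 := by
      rw [mul_assoc, Complex.mul_conj]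
      simp [Complex.mul_re, Complex.normSq_eq_norm_sq]
      norm_cast
    rw [h3]; ring
  rw [hre_int]
  have hpsi1_int : IntegrableOn (fun x => psiF' P xT 1 x) T volume :=
    integrableOn_of_cont _ (hΨc.comp (Continuous.prodMk_right (1:ℝ))) T hbd
  have hq_int : IntegrableOn (fun x : E3 => ‖evalP P x‖ ^ 2) T volume :=
    integrableOn_of_cont _ hq T hbd
  calc (3 / 2 : ℝ) * ∫ x in T, ‖evalP P x‖ ^ 2
      ≤ (3 / 2 : ℝ) * (∫ x in T, ‖evalP P x‖ ^ 2) + (1/2 : ℝ) * ∫ x in T, psiF' P xT 1 x := by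
        linarith [hderiv_nonneg]
    _ = ∫ x in T, ((3/2 : ℝ) * ‖evalP P x‖ ^ 2 + (1/2 : ℝ) * psiF' P xT 1 x) := by
        rw [integral_add (hq_int.const_mul _) (hpsi1_int.const_mul _),
          integral_const_mul, integral_const_mul]
    _ = ∫ x in T, (divRadial P xT x * (starRingEnd ℂ) (evalP P x)).re := by
        apply setIntegral_congr_fun hTm
        intro x _; exact (hpt x).symm
end
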